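/- Let A = (A, ∘) with x ∘ y = φ(x) + y for an automorphism φ of a group (A,+) of order k. Then A satisfies a bracketing identity t ≈ t' if and only if ld_T(i) ≡ ld_{T'}(i) (mod k) for all leaves i, where T, T' are the binary trees of t, t'. -/

import Mathlib

/-- Binary trees: every internal vertex has exactly a left and a right child. -/
inductive BTree : Type where
  | leaf : BTree
  | node : BTree → BTree → BTree

namespace BTree

/-- Number of leaves. -/
def numLeaves : BTree → ℕ
  | leaf => 1
  | node l r => l.numLeaves + r.numLeaves

/-- Addresses of the leaves in left-to-right order, as words over `{0,1}`;
`false` records a left step (0) and `true` a right step (1). -/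
def addrs : BTree → List (List Bool)
  | leaf => [[]]
  | node l r => (l.addrs.map (fun w => false :: w)) ++ (r.addrs.map (fun w => true :: w))

/-- Address of the `i`-th leaf (0-indexed, left to right). -/
def addr (T : BTree) (i : ℕ) : List Bool := T.addrs.getD i []

/-- Left depth of the `i`-th leaf: number of left steps (0's) in its address. -/
def ld (T : BTree) (i : ℕ) : ℕ := (T.addr i).count false

/-- Right depth of the `i`-th leaf: number of right steps (1's) in its address. -/
def rd (T : BTree) (i : ℕ) : ℕ := (T.addr i).count true

/-- Total depth of the `i`-th leaf. -/
def depth (T : BTree) (i : ℕ) : ℕ := (T.addr i).length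

end BTree

/-- Evaluation of the bracketing corresponding to a binary tree, with the
variables `f k, f (k+1), ...` plugged in at the leaves, left to right. -/
def BTree.evalAux {A : Type*} (op : A → A → A) (f : ℕ → A) : BTree → ℕ → A
  | .leaf, k => f k
  | .node l r, k => op (l.evalAux op f k) (r.evalAux op f (k + l.numLeaves))

/-- Term operation induced on `A` by the bracketing corresponding to `T`. -/
def BTree.eval {A : Type*} (op : A → A → A) (T : BTree) (f : ℕ → A) : A :=
  T.evalAux op f 0

/-- `φ_w` for a word `w` over `{0,1}`: `φ_ε = id`, `φ_{0w} = φ₀ ∘ φ_w`, `φ_{1w} = φ₁ ∘ φ_w`. -/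
def phiWord {A : Type*} (φ₀ φ₁ : A → A) : List Bool → A → A
  | [] => id
  | c :: w => (if c then φ₁ else φ₀) ∘ phiWord φ₀ φ₁ w


namespace BTree

theorem addrs_length (T : BTree) : T.addrs.length = T.numLeaves := by
  induction T with
  | leaf => rfl
  | node l r ihl ihr => simp [addrs, numLeaves, ihl, ihr]

theorem addr_node_left (l r : BTree) (i : ℕ) (h : i < l.numLeaves) :
    (node l r).addr i = false :: l.addr i := by
  have h' : i < l.addrs.length := by rw [addrs_length]; exact h
  have h2 : i < ((l.addrs.map (fun w => false :: w))).length := by simpa using h'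
  rw [addr, addrs, List.getD_append _ _ _ _ h2, List.getD_eq_getElem _ _ h2,
    List.getElem_map, addr, List.getD_eq_getElem _ _ h']

theorem addr_node_right (l r : BTree) (j : ℕ) (h : j < r.numLeaves) :
    (node l r).addr (l.numLeaves + j) = true :: r.addr j := by
  have h' : j < r.addrs.length := by rw [addrs_length]; exact h
  have h2 : j < ((r.addrs.map (fun w => true :: w))).length := by simpa using h'
  have hlen : (l.addrs.map (fun w => false :: w)).length = l.numLeaves := by
    simp [addrs_length]
  rw [addr, addrs]
  rw [show l.numLeaves + j = (l.addrs.map (fun w => false :: w)).length + j by rw [hlen]]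
  rw [List.getD_append_right _ _ _ _ (Nat.le_add_right _ _)]
  simp only [Nat.add_sub_cancel_left]
  rw [List.getD_eq_getElem _ _ h2, List.getElem_map, addr, List.getD_eq_getElem _ _ h']

theorem ld_node_left (l r : BTree) (i : ℕ) (h : i < l.numLeaves) :
    (node l r).ld i = l.ld i + 1 := by
  simp [ld, addr_node_left l r i h, List.count_cons]

theorem ld_node_right (l r : BTree) (j : ℕ) (h : j < r.numLeaves) :
    (node l r).ld (l.numLeaves + j) = r.ld j := by
  simp [ld, addr_node_right l r j h, List.count_cons]

theorem evalAux_eq {A : Type*} [AddGroup A] (φ : AddAut A) (f : ℕ → A) :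
    ∀ (T : BTree) (k : ℕ), T.evalAux (fun x y => φ x + y) f k
      = ((List.range T.numLeaves).map (fun i => (T.ld i • φ) (f (k + i)))).sum := by
  intro T
  induction T with
  | leaf =>
      intro k
      simp [evalAux, numLeaves, ld, addr, addrs, List.range_succ]
  | node l r ihl ihr =>
      intro k
      have hsplit : List.range (l.numLeaves + r.numLeaves)
          = List.range l.numLeaves ++ (List.range r.numLeaves).map (l.numLeaves + ·) :=
        List.range_add
      simp only [evalAux, numLeaves, hsplit, List.map_append, List.sum_append, List.map_map]
      congr 1
      · rw [ihl k, map_list_sum (φ : A ≃+ A), List.map_map]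
        refine congrArg List.sum (List.map_congr_left fun i hi => ?_)
        have hi' : i < l.numLeaves := List.mem_range.mp hi
        simp only [Function.comp]
        rw [ld_node_left l r i hi', succ_nsmul']
        rfl
      · rw [ihr (k + l.numLeaves)]
        refine congrArg List.sum (List.map_congr_left fun j hj => ?_)
        have hj' : j < r.numLeaves := List.mem_range.mp hj
        simp only [Function.comp]
        rw [ld_node_right l r j hj']
        ring_nf

end BTree


theorem list_sum_single {A : Type*} [AddGroup A] (g : ℕ → A) :
    ∀ (n : ℕ) (i : ℕ), i < n → (∀ j, j ≠ i → g j = 0) →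
      ((List.range n).map g).sum = g i := by
  intro n
  induction n with
  | zero => intro i hi; omega
  | succ n ih =>
      intro i hi h0
      rw [List.range_succ, List.map_append, List.sum_append]
      rcases Nat.lt_or_ge i n with h | h
      · rw [ih i h h0]
        simp [h0 n (by omega)]
      · have hin : i = n := by omega
        have : ((List.range n).map g).sum = 0 := by
          apply List.sum_eq_zero
          intro x hx
          simp only [List.mem_map, List.mem_range] at hx
          obtain ⟨j, hj, rfl⟩ := hx
          exact h0 j (by omega)
        simp [this, hin]

/-- If `x ∘ y = φ(x) + y` with `φ` of order `k`, then `t ≈ t'` holds iff the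
left depth sequences of the two trees agree modulo `k`. -/
theorem stmt12 (A : Type*) [AddGroup A] (φ : AddAut A) (k : ℕ)
    (hk : addOrderOf φ = k) (hk0 : 0 < k)
    (T T' : BTree) (n : ℕ) (hT : T.numLeaves = n) (hT' : T'.numLeaves = n) :
    (∀ f : ℕ → A, T.eval (fun x y => φ x + y) f
        = T'.eval (fun x y => φ x + y) f) ↔
      ∀ i < n, Nat.ModEq k (T.ld i) (T'.ld i) := by
  have heval : ∀ (S : BTree) (f : ℕ → A), S.numLeaves = n →
      S.eval (fun x y => φ x + y) f
        = ((List.range n).map (fun i => (S.ld i • φ) (f i))).sum := by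
    intro S f hS
    rw [BTree.eval, BTree.evalAux_eq φ f S 0, hS]
    simp
  constructor
  · intro h i hi
    have key : ∀ a : A, (T.ld i • φ) a = (T'.ld i • φ) a := by
      intro a
      have := h (fun j => if j = i then a else 0)
      rw [heval T _ hT, heval T' _ hT'] at this
      rw [list_sum_single _ n i hi (fun j hj => by simp [hj]),
          list_sum_single _ n i hi (fun j hj => by simp [hj])] at this
      simpa using this
    have hpow : (T.ld i • φ) = (T'.ld i • φ) := by
      ext a; exact key a
    rw [← hk]
    exact (nsmul_eq_nsmul_iff_modEq).mp hpow
  · intro h f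
    rw [heval T f hT, heval T' f hT']
    refine congrArg List.sum (List.map_congr_left fun i hi => ?_)
    have hi' : i < n := List.mem_range.mp hi
    have : (T.ld i • φ) = (T'.ld i • φ) := by
      rw [nsmul_eq_nsmul_iff_modEq, hk]
      exact h i hi'
    rw [this]
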